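/- Let $\omega, \sigma$ be weight functions with $\sigma = o(\omega)$ at infinity, and let $\phi_\sigma^*, \phi_\omega^*$ be the Young conjugates of $x \mapsto \sigma(e^x)$ and $x\mapsto \omega(e^x)$. Then for every $n \ge 1$ and every $h > 0$ there exists $C > 0$ such that $\exp(\tfrac1n \phi_\omega^*(np)) \le C h^p \exp(\phi_\sigma^*(p))$ for all $p\in\mathbb{N}$; i.e., $M^n_\omega \prec M^1_\sigma$. -/

import Mathlib

open Asymptotics Filter

lemma aux_little (ω σ : ℝ → ℝ) (hσmono : MonotoneOn σ (Set.Ici 0))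
    (hσnonneg : ∀ t : ℝ, 0 ≤ t → 0 ≤ σ t) (hωnonneg : ∀ t : ℝ, 0 ≤ t → 0 ≤ ω t)
    (hlittle : σ =o[atTop] ω) (K : ℝ) (hK : 0 < K) :
    ∃ A : ℝ, 0 ≤ A ∧ ∀ t : ℝ, 0 ≤ t → K * σ t ≤ ω t + A := by
  have h := hlittle.def (show (0:ℝ) < 1/K by positivity)
  rw [eventually_atTop] at h
  obtain ⟨T, hT⟩ := h
  set T' := max T 1 with hT'def
  have hT'0 : (0:ℝ) ≤ T' := le_trans zero_le_one (le_max_right _ _)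
  have hσT' : 0 ≤ σ T' := hσnonneg _ hT'0
  refine ⟨K * σ T', mul_nonneg hK.le hσT', fun t ht => ?_⟩
  rcases le_total t T' with hle | hle
  · have h1 : σ t ≤ σ T' := hσmono ht hT'0 hle
    have h2 : 0 ≤ ω t := hωnonneg t ht
    nlinarith
  · have h1 := hT t (le_trans (le_max_left _ _) hle)
    have ht' : (0:ℝ) ≤ t := le_trans hT'0 hle
    rw [Real.norm_eq_abs, Real.norm_eq_abs, abs_of_nonneg (hσnonneg t ht'),
      abs_of_nonneg (hωnonneg t ht')] at h1
    have h2 : K * σ t ≤ ω t := by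
      have := mul_le_mul_of_nonneg_left h1 hK.le
      calc K * σ t ≤ K * (1/K * ω t) := this
        _ = ω t := by field_simp
    nlinarith

lemma aux_shift (σ : ℝ → ℝ) (hσmono : MonotoneOn σ (Set.Ici 0))
    (hσnonneg : ∀ t : ℝ, 0 ≤ t → 0 ≤ σ t)
    (hσO : (fun t => σ (2 * t)) =O[atTop] σ) (L : ℝ) (hL : 0 ≤ L) :
    ∃ m B : ℝ, 1 ≤ m ∧ 0 ≤ B ∧ ∀ t : ℝ, 0 ≤ t → σ (Real.exp L * t) ≤ m * σ t + B := by
  -- global doubling bound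
  obtain ⟨c, hc⟩ := hσO.bound
  rw [eventually_atTop] at hc
  obtain ⟨T, hT⟩ := hc
  set c' := max c 1 with hc'def
  have hc'1 : (1:ℝ) ≤ c' := le_max_right _ _
  set T' := max T 0 with hT'def
  have hT'0 : (0:ℝ) ≤ T' := le_max_right _ _
  have hD : 0 ≤ σ (2 * T') := hσnonneg _ (by linarith)
  have hdouble : ∀ t : ℝ, 0 ≤ t → σ (2 * t) ≤ c' * σ t + σ (2 * T') := by
    intro t ht
    rcases le_total t T' with hle | hle
    · have h1 : σ (2 * t) ≤ σ (2 * T') :=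
        hσmono (Set.mem_Ici.mpr (by linarith)) (Set.mem_Ici.mpr (by linarith)) (by linarith)
      have h2 : 0 ≤ σ t := hσnonneg t ht
      nlinarith
    · have h1 := hT t (le_trans (le_max_left _ _) hle)
      have ht0 : (0:ℝ) ≤ t := le_trans hT'0 hle
      rw [Real.norm_eq_abs, Real.norm_eq_abs, abs_of_nonneg (hσnonneg _ (by linarith)),
        abs_of_nonneg (hσnonneg t ht0)] at h1
      have h2 : 0 ≤ σ t := hσnonneg t ht0
      have h3 : c * σ t ≤ c' * σ t := mul_le_mul_of_nonneg_right (le_max_left _ _) h2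
      nlinarith
  -- iterate
  have hiter : ∀ j : ℕ, ∃ B : ℝ, 0 ≤ B ∧ ∀ t : ℝ, 0 ≤ t → σ (2 ^ j * t) ≤ c' ^ j * σ t + B := by
    intro j
    induction j with
    | zero => exact ⟨0, le_refl 0, fun t ht => by simp⟩
    | succ k ih =>
      obtain ⟨B, hB0, hB⟩ := ih
      refine ⟨c' * B + σ (2 * T'), by nlinarith, fun t ht => ?_⟩
      have h1 : σ (2 ^ (k+1) * t) = σ (2 * (2 ^ k * t)) := by ring_nf
      have h2 : σ (2 * (2 ^ k * t)) ≤ c' * σ (2 ^ k * t) + σ (2 * T') :=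
        hdouble _ (by positivity)
      have h3 := hB t ht
      have h4 : c' * σ (2 ^ k * t) ≤ c' * (c' ^ k * σ t + B) :=
        mul_le_mul_of_nonneg_left h3 (by linarith)
      rw [h1]
      have h5 : c' * (c' ^ k * σ t + B) = c' ^ (k+1) * σ t + c' * B := by ring
      linarith
  -- choose j with exp L ≤ 2^j
  obtain ⟨j, hj⟩ := pow_unbounded_of_one_lt (Real.exp L) (one_lt_two (α := ℝ))
  obtain ⟨B, hB0, hB⟩ := hiter j
  refine ⟨c' ^ j, B, one_le_pow₀ hc'1, hB0, fun t ht => ?_⟩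
  have h1 : σ (Real.exp L * t) ≤ σ (2 ^ j * t) := by
    apply hσmono (Set.mem_Ici.mpr (by positivity)) (Set.mem_Ici.mpr (by positivity))
    exact mul_le_mul_of_nonneg_right hj.le ht
  exact le_trans h1 (hB t ht)

/-- If `σ = o(ω)` for weight functions `σ, ω`, then `M^n_ω ≺ M^1_σ`: for every
`n ≥ 1` and `h > 0` there is `C > 0` with
`exp(φ_ω*(np)/n) ≤ C hᵖ exp(φ_σ*(p))` for all `p`. -/
theorem stmt18 (ω σ : ℝ → ℝ)
    (hωcont : ContinuousOn ω (Set.Ici 0)) (hωmono : MonotoneOn ω (Set.Ici 0))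
    (hωzero : ∀ t ∈ Set.Icc (0 : ℝ) 1, ω t = 0)
    (hωnonneg : ∀ t : ℝ, 0 ≤ t → 0 ≤ ω t)
    (hωO : (fun t => ω (2 * t)) =O[atTop] ω)
    (hωlog : (fun t => Real.log t) =o[atTop] ω)
    (hσcont : ContinuousOn σ (Set.Ici 0)) (hσmono : MonotoneOn σ (Set.Ici 0))
    (hσzero : ∀ t ∈ Set.Icc (0 : ℝ) 1, σ t = 0)
    (hσnonneg : ∀ t : ℝ, 0 ≤ t → 0 ≤ σ t)
    (hσO : (fun t => σ (2 * t)) =O[atTop] σ)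
    (hσlog : (fun t => Real.log t) =o[atTop] σ)
    (φω φσ : ℝ → ℝ)
    (hφω : ∀ x : ℝ, 0 ≤ x → φω x = ω (Real.exp x))
    (hφσ : ∀ x : ℝ, 0 ≤ x → φσ x = σ (Real.exp x))
    (hωconv : ConvexOn ℝ (Set.Ici 0) φω) (hσconv : ConvexOn ℝ (Set.Ici 0) φσ)
    (φωs φσs : ℝ → ℝ)
    (hφωs : ∀ y : ℝ, 0 ≤ y →
      IsLUB {z : ℝ | ∃ x : ℝ, 0 ≤ x ∧ z = x * y - φω x} (φωs y))
    (hφσs : ∀ y : ℝ, 0 ≤ y →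
      IsLUB {z : ℝ | ∃ x : ℝ, 0 ≤ x ∧ z = x * y - φσ x} (φσs y))
    (hlittle : σ =o[atTop] ω) :
    ∀ n : ℕ, 1 ≤ n → ∀ h : ℝ, 0 < h → ∃ C : ℝ, 0 < C ∧ ∀ p : ℕ,
      Real.exp ((1 / (n : ℝ)) * φωs ((n : ℝ) * (p : ℝ))) ≤
        C * h ^ p * Real.exp (φσs (p : ℝ)) := by
  intro n hn h hh
  have hn0 : (0:ℝ) < (n:ℝ) := by exact_mod_cast Nat.lt_of_lt_of_le Nat.zero_lt_one hn
  set L : ℝ := max 0 (-Real.log h) with hLdef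
  have hL0 : 0 ≤ L := le_max_left _ _
  have hexpL : Real.exp (-L) ≤ h := by
    have h1 : -L ≤ Real.log h := by
      have := le_max_right 0 (-Real.log h)
      linarith
    calc Real.exp (-L) ≤ Real.exp (Real.log h) := Real.exp_le_exp.mpr h1
      _ = h := Real.exp_log hh
  obtain ⟨m, B, hm1, hB0, hshift⟩ := aux_shift σ hσmono hσnonneg hσO L hL0
  have hm0 : (0:ℝ) < m := lt_of_lt_of_le one_pos hm1
  obtain ⟨A, hA0, hAbd⟩ := aux_little ω σ hσmono hσnonneg hωnonneg hlittle ((n:ℝ) * m)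
    (by positivity)
  refine ⟨Real.exp (B + A / n), Real.exp_pos _, fun p => ?_⟩
  have hp0 : (0:ℝ) ≤ (p:ℝ) := Nat.cast_nonneg p
  -- Step b : m * φσs (p/m) ≤ φσs p - L*p + B
  have hb : m * φσs ((p:ℝ)/m) ≤ φσs (p:ℝ) - L * p + B := by
    have hlub := hφσs ((p:ℝ)/m) (by positivity)
    have hub : (φσs (p:ℝ) - L * p + B) / m ∈
        upperBounds {z : ℝ | ∃ x : ℝ, 0 ≤ x ∧ z = x * ((p:ℝ)/m) - φσ x} := by
      rintro z ⟨x, hx, rfl⟩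
      have h1 : φσ (x + L) ≤ m * φσ x + B := by
        rw [hφσ x hx, hφσ (x + L) (by linarith), Real.exp_add, mul_comm (Real.exp x)]
        exact hshift (Real.exp x) (Real.exp_pos x).le
      have h2 : (x + L) * (p:ℝ) - φσ (x + L) ≤ φσs (p:ℝ) :=
        (hφσs (p:ℝ) hp0).1 ⟨x + L, by linarith, rfl⟩
      rw [le_div_iff₀ hm0]
      have he : (x * ((p:ℝ)/m) - φσ x) * m = x * (p:ℝ) - m * φσ x := by
        field_simp
      have h3 : (x + L) * (p:ℝ) = x * (p:ℝ) + L * (p:ℝ) := by ring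
      linarith
    have h4 := hlub.2 hub
    rw [le_div_iff₀ hm0] at h4
    linarith
  -- Step a : φωs (n*p) ≤ (n*m) * φσs (p/m) + A
  have ha : φωs ((n:ℝ) * (p:ℝ)) ≤ ((n:ℝ) * m) * φσs ((p:ℝ)/m) + A := by
    apply (hφωs ((n:ℝ) * (p:ℝ)) (by positivity)).2
    rintro z ⟨x, hx, rfl⟩
    have h1 : ((n:ℝ) * m) * φσ x ≤ φω x + A := by
      rw [hφσ x hx, hφω x hx]
      exact hAbd (Real.exp x) (Real.exp_pos x).le
    have h2 : x * ((p:ℝ)/m) - φσ x ≤ φσs ((p:ℝ)/m) :=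
      (hφσs ((p:ℝ)/m) (by positivity)).1 ⟨x, hx, rfl⟩
    have h3 := mul_le_mul_of_nonneg_left h2 (by positivity : (0:ℝ) ≤ (n:ℝ) * m)
    have h4 : ((n:ℝ) * m) * (x * ((p:ℝ)/m) - φσ x)
        = x * ((n:ℝ) * (p:ℝ)) - ((n:ℝ) * m) * φσ x := by
      field_simp
    linarith
  -- combine
  have hc : (1 / (n:ℝ)) * φωs ((n:ℝ) * (p:ℝ)) ≤ φσs (p:ℝ) - L * p + (B + A / n) := by
    have h5 := mul_le_mul_of_nonneg_left ha (by positivity : (0:ℝ) ≤ 1 / (n:ℝ))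
    have h6 : (1 / (n:ℝ)) * (((n:ℝ) * m) * φσs ((p:ℝ)/m) + A)
        = m * φσs ((p:ℝ)/m) + A / n := by
      field_simp
    linarith
  calc Real.exp ((1 / (n:ℝ)) * φωs ((n:ℝ) * (p:ℝ)))
      ≤ Real.exp (φσs (p:ℝ) - L * p + (B + A / n)) := Real.exp_le_exp.mpr hc
    _ = Real.exp (B + A / n) * Real.exp (-L) ^ p * Real.exp (φσs (p:ℝ)) := by
        rw [← Real.exp_nat_mul, ← Real.exp_add, ← Real.exp_add]
        ring_nf
    _ ≤ Real.exp (B + A / n) * h ^ p * Real.exp (φσs (p:ℝ)) := by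
        apply mul_le_mul_of_nonneg_right _ (Real.exp_pos _).le
        apply mul_le_mul_of_nonneg_left _ (Real.exp_pos _).le
        exact pow_le_pow_left₀ (Real.exp_pos _).le hexpL p
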